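/- For every real number y with 0 ≤ y ≤ 1, cos(y)·ln(cos(y)) + y·sin(y) ≥ 0. -/

import Mathlib

open Real

theorem stmt_1 (y : ℝ) (h0 : 0 ≤ y) (h1 : y ≤ 1) :
    Real.cos y * Real.log (Real.cos y) + y * Real.sin y ≥ 0 := by
  rcases eq_or_lt_of_le h0 with rfl | hy
  · simp
  have hcos : 0 < Real.cos y := by
    apply Real.cos_pos_of_mem_Ioo
    constructor <;> nlinarith [Real.pi_gt_three]
  -- log (cos y) ≥ 1 - 1/cos y
  have hlog : Real.log (Real.cos y) ≥ 1 - 1 / Real.cos y := by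
    have := Real.log_le_sub_one_of_pos (x := 1 / Real.cos y) (by positivity)
    rw [Real.log_div one_ne_zero hcos.ne', Real.log_one] at this
    linarith
  have h2 : Real.cos y * Real.log (Real.cos y) ≥ Real.cos y - 1 := by
    have := mul_le_mul_of_nonneg_left hlog.le hcos.le
    rw [mul_sub, mul_one_div, div_self hcos.ne'] at this
    -- careful: hlog is ≥, we used hlog.le wrongly
    linarith
  have hsin : y - y ^ 3 / 4 < Real.sin y := by
    have := Real.sin_gt_sub_cube hy
    linarith [pow_pos hy 3]
  have hc2 : 1 - y ^ 2 / 2 ≤ Real.cos y := Real.one_sub_sq_div_two_le_cos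
  have hy2 : y ^ 2 ≤ 1 := by nlinarith
  nlinarith [mul_lt_mul_of_pos_left hsin hy, mul_nonneg (sq_nonneg y) (sub_nonneg.2 hy2)]
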